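/- Let T > R > P > S with 2R > T + S. Then the gradient identity (d/dx_e) u(x_e, f_y(x_e)) = (u_C - u_D)·(1 - (x_C - x_D)(y_C - y_D)) holds, where u(x, y) = xyR + x(1-y)S + (1-x)yT + (1-x)(1-y)P, f_y(x) = x(y_C - y_D) + y_D, and u_C - u_D is the payoff-difference [(y_C-y_D)(x_e(R-S)+(1-x_e)(T-P)) - (y_e(T-R)+(1-y_e)(P-S))]/[1-(x_C-x_D)(y_C-y_D)] evaluated at y_e = f_y(x_e). -/

import Mathlib

lemma quad_deriv (a b c xe : ℝ) :
    HasDerivAt (fun x : ℝ => a * x ^ 2 + b * x + c) (2 * a * xe + b) xe := by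
  have h1 : HasDerivAt (fun x : ℝ => x ^ 2) (2 * xe) xe := by
    simpa using hasDerivAt_pow 2 xe
  have h2 := ((h1.const_mul a).add ((hasDerivAt_id xe).const_mul b)).add_const c
  refine h2.congr_deriv ?_
  ring

theorem gradient_identity
    (T R P S : ℝ) (hTR : T > R) (hRP : R > P) (hPS : P > S) (hrep : 2 * R > T + S)
    (xC xD yC yD : ℝ) (hden : 1 - (xC - xD) * (yC - yD) ≠ 0)
    (u : ℝ → ℝ → ℝ)
    (hu : ∀ x y, u x y = x * y * R + x * (1 - y) * S + (1 - x) * y * T +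
      (1 - x) * (1 - y) * P)
    (fy : ℝ → ℝ) (hfy : ∀ x, fy x = x * (yC - yD) + yD)
    (xe ye : ℝ) (hye : ye = fy xe)
    (uCD : ℝ)
    (huCD : uCD = ((yC - yD) * (xe * (R - S) + (1 - xe) * (T - P)) -
      (ye * (T - R) + (1 - ye) * (P - S))) / (1 - (xC - xD) * (yC - yD))) :
    HasDerivAt (fun x : ℝ => u x (fy x))
      (uCD * (1 - (xC - xD) * (yC - yD))) xe := by
  set k := yC - yD with hk
  have h := quad_deriv (k * (R - S - T + P)) (yD * (R - S - T + P) + S - P + k * (T - P)) (yD * (T - P) + P) xe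
  have hfun : (fun x : ℝ => u x (fy x)) =
      (fun x : ℝ => (k * (R - S - T + P)) * x ^ 2 +
        (yD * (R - S - T + P) + S - P + k * (T - P)) * x + (yD * (T - P) + P)) := by
    funext x
    rw [hu, hfy]
    ring
  rw [hfun]
  convert h using 1
  rw [huCD, hye, hfy, div_mul_cancel₀ _ hden]
  ring
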